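/- arXiv:1601.06390 — 2 statements merged into one kernel-verified Lean document; each statement's English description precedes it below -/
import Mathlib

section
/- Let u ∈ 𝒜_n^* and i ∈ {1,...,n−1}. If e_i(u) is defined, then std(e_i(u)) = std(u); if f_i(u) is defined, then std(f_i(u)) = std(u). -/
/-!
Common setup: words over the alphabet `𝒜_n = {1,…,n}` (modelled as `List ℕ`),
quasi-Kashiwara operators, the quasi-crystal graph, Kashiwara operators,
quasi-ribbon words, and the hypoplactic congruence.
-/

namespace HypoCrystal

noncomputable section
open scoped Classical

/-- `u` is a word over the alphabet `𝒜_n = {1,…,n}`. -/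
def IsWord (n : ℕ) (u : List ℕ) : Prop := ∀ a ∈ u, 1 ≤ a ∧ a ≤ n

/-- `u` has an `i`-inversion: some letter `i+1` occurs strictly to the left of some letter `i`. -/
def HasInv (i : ℕ) (u : List ℕ) : Prop :=
  ∃ v w x : List ℕ, u = v ++ (i + 1) :: w ++ i :: x

/-- Replace the first (leftmost) occurrence of `a` by `b`, if any; otherwise `none`. -/
def replaceFirst (a b : ℕ) : List ℕ → Option (List ℕ)
  | [] => none
  | x :: xs => if x = a then some (b :: xs) else (replaceFirst a b xs).map (x :: ·)

/-- The quasi-Kashiwara raising operator `e_i` (partial map, `none` = undefined):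
if `u` has an `i`-inversion it is undefined; otherwise it replaces the leftmost
letter `i+1` by `i` (undefined if there is no letter `i+1`). -/
def qe (i : ℕ) (u : List ℕ) : Option (List ℕ) :=
  if HasInv i u then none else replaceFirst (i + 1) i u

/-- The quasi-Kashiwara lowering operator `f_i` (partial map, `none` = undefined):
if `u` has an `i`-inversion it is undefined; otherwise it replaces the rightmost
letter `i` by `i+1` (undefined if there is no letter `i`). -/
def qf (i : ℕ) (u : List ℕ) : Option (List ℕ) :=
  if HasInv i u then none else (replaceFirst i (i + 1) u.reverse).map List.reverse

/-- Weight of a word: `wt u a` is the number of occurrences of the letter `a` in `u`. -/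
def wt (u : List ℕ) : ℕ → ℕ := fun a => u.count a

/-- There is an edge labelled `i` from `u` to `v` in the quasi-crystal graph `Γ(hypo_n)`. -/
def Edge (n i : ℕ) (u v : List ℕ) : Prop := 1 ≤ i ∧ i < n ∧ qf i u = some v

/-- `u` and `v` are adjacent (in the underlying undirected graph) in `Γ(hypo_n)`. -/
def Adj (n : ℕ) (u v : List ℕ) : Prop := ∃ i, Edge n i u v ∨ Edge n i v u

/-- `v` lies in the connected component `Γ(hypo_n, u)` of `u` in the quasi-crystal graph. -/
def SameComp (n : ℕ) : List ℕ → List ℕ → Prop := Relation.ReflTransGen (Adj n)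

/-- `u` is a highest-weight word: no raising operator `e_i` is defined on `u`. -/
def HighestWeight (n : ℕ) (u : List ℕ) : Prop := ∀ i, 1 ≤ i → i < n → qe i u = none

/-- `θ` is a quasi-crystal isomorphism from the component of `u` onto the component of `v`:
a weight-preserving bijection preserving labelled edges in both directions. -/
def IsQCIso (n : ℕ) (u v : List ℕ) (θ : List ℕ → List ℕ) : Prop :=
  Set.BijOn θ {x | SameComp n u x} {y | SameComp n v y} ∧
  (∀ x, SameComp n u x → wt (θ x) = wt x) ∧
  (∀ x y, SameComp n u x → SameComp n u y → ∀ i, (Edge n i x y ↔ Edge n i (θ x) (θ y)))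

/-- `u ∼ v`: there is a quasi-crystal isomorphism between the components of `u` and `v`
taking `u` to `v`. -/
def Sim (n : ℕ) (u v : List ℕ) : Prop :=
  ∃ θ : List ℕ → List ℕ, IsQCIso n u v θ ∧ θ u = v

/-- The standardization of `u`: position `k` receives the rank (starting at 1) of the
pair `(u_k, k)` among all pairs `(u_l, l)` ordered lexicographically. -/
def std (u : List ℕ) : List ℕ :=
  (List.range u.length).map fun k =>
    1 + ((List.range u.length).filter fun l =>
      u.getD l 0 < u.getD k 0 ∨ (u.getD l 0 = u.getD k 0 ∧ l < k)).length

/-- The maximal strictly decreasing factors of a word (the columns of its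
quasi-ribbon tabloid, each read bottom-to-top). -/
def decFactors : List ℕ → List (List ℕ)
  | [] => []
  | a :: rest =>
    match decFactors rest with
    | (b :: f) :: fs => if b < a then (a :: b :: f) :: fs else [a] :: (b :: f) :: fs
    | l => [a] :: l

/-- `w` is a quasi-ribbon word: its quasi-ribbon tabloid is a quasi-ribbon tableau,
i.e. the bottom entry of each column is ≤ the top entry of the next column. -/
def IsQRWord (w : List ℕ) : Prop :=
  (decFactors w).Chain' fun c d => c.headD 0 ≤ d.getLastD 0

/-- Row lengths (top to bottom) of the ribbon diagram whose column heights
(left to right) are given. -/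
def rowLengths : List ℕ → List ℕ
  | [] => []
  | [d] => List.replicate d 1
  | d :: e :: rest =>
    List.replicate (d - 1) 1 ++
      (match rowLengths (e :: rest) with
       | [] => [1]
       | r :: rs => (r + 1) :: rs)

/-- The shape (as a composition, listed top row first) of the quasi-ribbon tabloid of `w`. -/
def shape (w : List ℕ) : List ℕ := rowLengths ((decFactors w).map List.length)

/-- Columns of the quasi-ribbon tableau of shape `α` whose `j`-th row consists
entirely of symbols `j`, where rows are labelled starting from `j₀`. -/
def hwCols : List ℕ → ℕ → List (List ℕ)
  | [], _ => []
  | [a], j => List.replicate a [j]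
  | a :: b :: rest, j =>
    List.replicate (a - 1) [j] ++
      (match hwCols (b :: rest) (j + 1) with
       | [] => [[j]]
       | c :: cs => (c ++ [j]) :: cs)

/-- The column reading of the quasi-ribbon tableau of shape `α` whose `j`-th row
consists entirely of symbols `j`. -/
def hwQR (α : List ℕ) : List ℕ := (hwCols α 1).flatten

/-- The defining relations `R_hypo` of the hypoplactic monoid of rank `n`. -/
inductive HypoRel (n : ℕ) : List ℕ → List ℕ → Prop
  | knuth1 {a b c : ℕ} : 1 ≤ a → a ≤ b → b < c → c ≤ n → HypoRel n [a, c, b] [c, a, b]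
  | knuth2 {a b c : ℕ} : 1 ≤ a → a < b → b ≤ c → c ≤ n → HypoRel n [b, a, c] [b, c, a]
  | quasi1 {a b c d : ℕ} : 1 ≤ a → a ≤ b → b < c → c ≤ d → d ≤ n →
      HypoRel n [c, a, d, b] [a, c, b, d]
  | quasi2 {a b c d : ℕ} : 1 ≤ a → a < b → b ≤ c → c < d → d ≤ n →
      HypoRel n [b, d, a, c] [d, b, c, a]

/-- The hypoplactic congruence `≡_hypo`: the congruence on the free monoid generated
by the relations `R_hypo`. -/
inductive HypoCong (n : ℕ) : List ℕ → List ℕ → Prop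
  | of {u v} : HypoRel n u v → HypoCong n u v
  | refl (u) : HypoCong n u u
  | symm {u v} : HypoCong n u v → HypoCong n v u
  | trans {u v w} : HypoCong n u v → HypoCong n v w → HypoCong n u w
  | append {u v u' v'} : HypoCong n u v → HypoCong n u' v' →
      HypoCong n (u ++ u') (v ++ v')

/-- The signature word of `u` for index `i`: each letter `i` becomes `(position, true)`
(that is, `+`) and each letter `i+1` becomes `(position, false)` (that is, `−`). -/
def signWord (i : ℕ) (u : List ℕ) : List (ℕ × Bool) :=
  ((List.range u.length).zip u).filterMap fun pa =>
    if pa.2 = i then some (pa.1, true)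
    else if pa.2 = i + 1 then some (pa.1, false) else none

/-- Iteratively delete factors `−+` from a signature word, producing the reduced
word `+^p −^q`. -/
def reduce : List (ℕ × Bool) → List (ℕ × Bool)
  | [] => []
  | x :: rest =>
    match reduce rest with
    | y :: rest' => if x.2 = false ∧ y.2 = true then rest' else x :: y :: rest'
    | [] => [x]

/-- The Kashiwara raising operator `ẽ_i`, computed by the signature rule: change to `i`
the letter `i+1` corresponding to the leftmost `−` of the reduced signature word. -/
def KE (i : ℕ) (u : List ℕ) : Option (List ℕ) :=
  (((reduce (signWord i u)).filter fun x => !x.2).head?).map fun x => u.set x.1 i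

/-- The Kashiwara lowering operator `f̃_i`, computed by the signature rule: change to `i+1`
the letter `i` corresponding to the rightmost `+` of the reduced signature word. -/
def KF (i : ℕ) (u : List ℕ) : Option (List ℕ) :=
  (((reduce (signWord i u)).filter fun x => x.2).getLast?).map fun x => u.set x.1 (i + 1)

/-- The Schützenberger involution on `𝒜_n^*`: reverse the word and replace each
letter `a` by `n − a + 1`. -/
def sharp (n : ℕ) (u : List ℕ) : List ℕ := u.reverse.map fun a => n + 1 - a

/-- The largest letter occurring in `u` (0 for the empty word). -/
def maxLetter (u : List ℕ) : ℕ := u.foldr max 0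

/-- `β` is coarser than `α` (`β ⪯ α`): they have the same weight and every proper
partial sum of `β` is a proper partial sum of `α`. -/
def Coarser (β α : List ℕ) : Prop :=
  β.sum = α.sum ∧ ∀ p < β.length, ∃ m < α.length, (β.take p).sum = (α.take m).sum

end
end HypoCrystal

namespace HypoCrystal

private lemma getD_lt {u : List ℕ} {m : ℕ} (h : m < u.length) : u.getD m 0 = u[m] := by
  simp [List.getD_eq_getElem?_getD, List.getElem?_eq_getElem h]

private lemma replaceFirst_spec {a b : ℕ} : ∀ {u v : List ℕ}, replaceFirst a b u = some v →
    ∃ p, ∃ hp : p < u.length, u[p] = a ∧ (∀ l (hl : l < u.length), l < p → u[l] ≠ a) ∧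
      v = u.set p b := by
  intro u
  induction u with
  | nil => intro v h; simp [replaceFirst] at h
  | cons x xs ih =>
    intro v h
    by_cases hx : x = a
    · simp [replaceFirst, hx] at h
      exact ⟨0, by simp, by simpa using hx,
        by intro l hl hl0; exact absurd hl0 (Nat.not_lt_zero l), by simp [← h]⟩
    · simp only [replaceFirst, hx, if_false, Option.map_eq_some_iff] at h
      obtain ⟨w, hw, rfl⟩ := h
      obtain ⟨p, hp, hpa, hleft, rfl⟩ := ih hw
      refine ⟨p + 1, by simpa using Nat.succ_lt_succ hp, by simpa using hpa, ?_, by simp⟩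
      intro l hl hlp
      cases l with
      | zero => simpa using hx
      | succ m =>
        have hm : m < xs.length := by simp at hl; omega
        simpa using hleft m hm (by omega)

private lemma hasInv_of {i : ℕ} {u : List ℕ} {l k : ℕ} (hlk : l < k) (hk : k < u.length)
    (hl : u[l]'(by omega) = i + 1) (hki : u[k] = i) : HasInv i u := by
  refine ⟨u.take l, (u.drop (l + 1)).take (k - (l + 1)), u.drop (k + 1), ?_⟩
  have h2 : (u.drop (l + 1)).drop (k - (l + 1)) = i :: u.drop (k + 1) := by
    rw [List.drop_drop]
    have hkl : l + 1 + (k - (l + 1)) = k := by omega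
    rw [hkl, List.drop_eq_getElem_cons hk, hki]
  have h3 : u.drop (l + 1) = (u.drop (l + 1)).take (k - (l + 1)) ++ i :: u.drop (k + 1) := by
    rw [← h2, List.take_append_drop]
  have h0 : u = u.take l ++ u[l]'(by omega) :: u.drop (l + 1) := by
    conv_lhs => rw [← List.take_append_drop l u,
      List.drop_eq_getElem_cons (show l < u.length by omega)]
  conv_lhs => rw [h0, hl, h3]
  simp

private lemma std_congr {u v : List ℕ} (hlen : v.length = u.length)
    (h : ∀ l k, l < u.length → k < u.length →
      ((v.getD l 0 < v.getD k 0 ∨ (v.getD l 0 = v.getD k 0 ∧ l < k)) ↔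
       (u.getD l 0 < u.getD k 0 ∨ (u.getD l 0 = u.getD k 0 ∧ l < k)))) :
    std v = std u := by
  unfold std
  rw [hlen]
  apply List.map_congr_left
  intro k hk
  rw [List.mem_range] at hk
  congr 1
  apply congrArg
  apply List.filter_congr
  intro l hl
  rw [List.mem_range] at hl
  exact decide_eq_decide.mpr (h l k hl hk)

/-- Let `u ∈ 𝒜_n^*` and `i ∈ {1,…,n−1}`. If `e_i(u)` is defined, then
`std(e_i(u)) = std(u)`; if `f_i(u)` is defined, then `std(f_i(u)) = std(u)`. -/
theorem qe_qf_preserve_standardization (n : ℕ) (u : List ℕ) (hu : IsWord n u)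
    (i : ℕ) (hi1 : 1 ≤ i) (hi2 : i < n) :
    (∀ v, qe i u = some v → std v = std u) ∧
    (∀ v, qf i u = some v → std v = std u) := by
  constructor
  · -- the `qe` part
    intro v hv
    unfold qe at hv
    split_ifs at hv with hinv
    obtain ⟨p, hp, hpa, hleft, rfl⟩ := replaceFirst_spec hv
    have hni : ∀ l k (hl : l < u.length) (hk : k < u.length), l < k →
        u[l] = i + 1 → u[k] ≠ i := fun l k hl hk hlk h1 h2 =>
      hinv (hasInv_of hlk hk h1 h2)
    apply std_congr (by simp)
    intro l k hl hk
    rw [getD_lt hl, getD_lt hk, getD_lt (by simpa using hl), getD_lt (by simpa using hk),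
      List.getElem_set, List.getElem_set]
    split_ifs with hc1 hc2 hc2
    · subst hc1; subst hc2; omega
    · subst hc1
      have h1 : u[k] = i → k < p := by
        intro hk1; by_contra hc
        exact hni p k hp hk (by omega) hpa hk1
      have h2 : u[k] = i + 1 → p < k := by
        intro hk1; by_contra hc
        exact hleft k hk (by omega) hk1
      omega
    · subst hc2
      have h1 : u[l] = i → l < p := by
        intro hl1; by_contra hc
        exact hni p l hp hl (by omega) hpa hl1
      have h2 : u[l] = i + 1 → p < l := by
        intro hl1; by_contra hc
        exact hleft l hl (by omega) hl1
      omega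
    · omega
  · -- the `qf` part
    intro v hv
    unfold qf at hv
    split_ifs at hv with hinv
    obtain ⟨w, hw, rfl⟩ := Option.map_eq_some_iff.mp hv
    obtain ⟨p, hp, hpa, hleft, rfl⟩ := replaceFirst_spec hw
    have hp' : p < u.length := by simpa using hp
    set q := u.length - 1 - p with hqdef
    have hq : q < u.length := by omega
    have hqi : u[q] = i := by
      have := hpa
      rwa [List.getElem_reverse] at this
    have hval : ∀ m (hm : m < u.length),
        ((u.reverse.set p (i + 1)).reverse).getD m 0 = if q = m then i + 1 else u[m] := by
      intro m hm
      rw [getD_lt (by simpa using hm), List.getElem_reverse, List.getElem_set]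
      simp only [List.length_set, List.length_reverse]
      by_cases hcm : p = u.length - 1 - m
      · rw [if_pos hcm, if_pos (by omega)]
      · rw [if_neg hcm, if_neg (by omega), List.getElem_reverse]
        simp only [show u.length - 1 - (u.length - 1 - m) = m from by omega]
    have hright : ∀ m (hm : m < u.length), q < m → u[m] ≠ i := by
      intro m hm hqm hmi
      refine hleft (u.length - 1 - m) (by simpa using (by omega : u.length - 1 - m < u.length))
        (by omega) ?_
      rw [List.getElem_reverse]
      simpa only [show u.length - 1 - (u.length - 1 - m) = m from by omega] using hmi
    have hni : ∀ m (hm : m < u.length), u[m] = i + 1 → q < m := by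
      intro m hm hmi
      by_contra hc
      rcases Nat.lt_or_ge m q with h | h
      · exact hinv (hasInv_of h hq hmi hqi)
      · have : m = q := by omega
        subst this
        omega
    apply std_congr (by simp)
    intro l k hl hk
    rw [getD_lt hl, getD_lt hk, hval l hl, hval k hk]
    split_ifs with hc1 hc2 hc2
    · subst hc1; subst hc2; omega
    · subst hc1
      have h1 : u[k] = i → k < q := by
        intro hk1
        have := hright k hk
        by_contra hc
        exact this (by omega) hk1
      have h2 : u[k] = i + 1 → q < k := fun hk1 => hni k hk hk1
      omega
    · subst hc2
      have h1 : u[l] = i → l < q := by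
        intro hl1
        have := hright l hl
        by_contra hc
        exact this (by omega) hl1
      have h2 : u[l] = i + 1 → q < l := fun hl1 => hni l hl hl1
      omega
    · omega

end HypoCrystal
end

section
/- Let α be a composition and let w ∈ 𝒜_n^* be a quasi-ribbon word of shape α. Then w is a highest-weight word if and only if wt(w) = α, i.e., |w|_j = α_j for j = 1,...,ℓ(α) and |w|_j = 0 for j > ℓ(α). -/
namespace HypoCrystal
open List

lemma mem_rev_range' {r d x : ℕ} : x ∈ (List.range' r d).reverse ↔ r ≤ x ∧ x < r + d := by
  simp only [List.mem_reverse, List.mem_range'_1]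

lemma count_range' (r d x : ℕ) :
    (List.range' r d).count x = if r ≤ x ∧ x < r + d then 1 else 0 := by
  induction d generalizing r with
  | zero => rw [if_neg (by omega)]; simp
  | succ m ih =>
    rw [List.range'_succ, List.count_cons, ih (r+1)]
    by_cases h1 : x = r <;> split_ifs <;> simp_all <;> omega

lemma count_rev_range' (r d x : ℕ) :
    ((List.range' r d).reverse).count x = if r ≤ x ∧ x < r + d then 1 else 0 := by
  rw [List.count_reverse, count_range']

lemma headD_rev_range' {r d : ℕ} (hd : 0 < d) :
    ((List.range' r d).reverse).headD 0 = r + d - 1 := by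
  rcases Nat.exists_eq_add_of_lt hd with ⟨m, rfl⟩
  simp [List.range'_concat]

lemma getD_replicate' (n k x : ℕ) : (List.replicate n x).getD k 0 = if k < n then x else 0 := by
  split_ifs with h
  · rw [List.getD_eq_getElem?_getD]; simp [h]
  · rw [List.getD_eq_getElem?_getD, List.getElem?_eq_none (by simpa using not_lt.mp h)]; rfl

lemma getLastD_cons_ne {a d : ℕ} {t : List ℕ} (h : t ≠ []) :
    (a :: t).getLastD d = t.getLastD d := by
  cases t with
  | nil => exact absurd rfl h
  | cons b t' => rw [List.getLastD_cons, List.getLastD_cons, List.getLastD_cons]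

lemma getLastD_mem' {c : List ℕ} (h : c ≠ []) : c.getLastD 0 ∈ c := by
  cases c with
  | nil => exact absurd rfl h
  | cons a t => rw [List.getLastD_cons]; exact List.getLastD_mem_cons

lemma headD_mem' {c : List ℕ} (h : c ≠ []) : c.headD 0 ∈ c := by
  cases c with
  | nil => exact absurd rfl h
  | cons a t => exact List.mem_cons_self

lemma mem_le_headD {c : List ℕ} (hs : c.Pairwise (· > ·)) {x : ℕ} (hx : x ∈ c) :
    x ≤ c.headD 0 := by
  cases c with
  | nil => simp at hx
  | cons a t =>
    rcases List.mem_cons.mp hx with rfl | h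
    · simp
    · exact le_of_lt (List.rel_of_pairwise_cons hs h)

lemma getLastD_le_mem {c : List ℕ} (hs : c.Pairwise (· > ·)) {x : ℕ} (hx : x ∈ c) :
    c.getLastD 0 ≤ x := by
  induction c with
  | nil => simp at hx
  | cons a t ih =>
    by_cases ht : t = []
    · subst ht; simp at hx; simp [hx]
    · rw [getLastD_cons_ne ht]
      rcases List.mem_cons.mp hx with rfl | h
      · exact le_of_lt (List.rel_of_pairwise_cons hs (getLastD_mem' ht))
      · exact ih hs.of_cons h

lemma getLastD_le_headD {c : List ℕ} (hs : c.Pairwise (· > ·)) (h : c ≠ []) :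
    c.getLastD 0 ≤ c.headD 0 :=
  getLastD_le_mem hs (headD_mem' h)

lemma sorted_headD_ge {c : List ℕ} (hs : c.Pairwise (· > ·)) (h : c ≠ []) :
    c.getLastD 0 + (c.length - 1) ≤ c.headD 0 := by
  induction c with
  | nil => exact absurd rfl h
  | cons a t ih =>
    by_cases ht : t = []
    · subst ht; simp
    · rw [getLastD_cons_ne ht]
      have h1 := ih hs.of_cons ht
      have h2 : t.headD 0 < a := List.rel_of_pairwise_cons hs (headD_mem' ht)
      have h3 : 1 ≤ t.length := List.length_pos_iff.mpr ht
      simp only [List.headD_cons, List.length_cons]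
      omega

lemma sorted_eq_range' {c : List ℕ} {r : ℕ} (hs : c.Pairwise (· > ·))
    (h1 : ∀ x ∈ c, r ≤ x) (h2 : ∀ x ∈ c, x < r + c.length) :
    c = (List.range' r c.length).reverse := by
  induction c with
  | nil => simp
  | cons a t ih =>
    have hat : ∀ y ∈ t, y < a := fun y hy => List.rel_of_pairwise_cons hs hy
    have ha2 : a < r + (t.length + 1) := by simpa using h2 a (by simp)
    have ht : t = (List.range' r t.length).reverse := by
      refine ih hs.of_cons (fun x hx => h1 x (by simp [hx])) (fun x hx => ?_)
      have := hat x hx; omega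
    have ha : a = r + t.length := by
      rcases Nat.eq_zero_or_pos t.length with h0 | h0
      · have : t = [] := List.length_eq_zero_iff.mp h0
        have := h1 a (by simp); omega
      · have hmem : r + t.length - 1 ∈ (List.range' r t.length).reverse :=
          mem_rev_range'.mpr (by omega)
        rw [← ht] at hmem
        have := hat _ hmem; omega
    have hlen : (a :: t).length = t.length + 1 := rfl
    rw [hlen, List.range'_concat]
    conv_lhs => rw [ht, ha]
    simp

lemma sorted_closure_eq_range' {c : List ℕ} (hs : c.Pairwise (· > ·)) (hne : c ≠ [])
    (hcl : ∀ j ∈ c, c.getLastD 0 < j → j - 1 ∈ c) :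
    c = (List.range' (c.getLastD 0) c.length).reverse := by
  induction c with
  | nil => exact absurd rfl hne
  | cons a t ih =>
    by_cases ht : t = []
    · subst ht; simp [List.range'_succ]
    · rw [getLastD_cons_ne ht]
      have hat : ∀ y ∈ t, y < a := fun y hy => List.rel_of_pairwise_cons hs hy
      have hcl' : ∀ j ∈ t, t.getLastD 0 < j → j - 1 ∈ t := by
        intro j hj hgt
        have hj1 : j - 1 ∈ a :: t := by
          refine hcl j (by simp [hj]) ?_
          rwa [getLastD_cons_ne ht]
        rcases List.mem_cons.mp hj1 with h | h
        · exfalso; have := hat j hj; omega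
        · exact h
      have ht' := ih hs.of_cons ht hcl'
      have hhead : t.headD 0 = t.getLastD 0 + t.length - 1 := by
        have := headD_rev_range' (r := t.getLastD 0) (d := t.length) (List.length_pos_iff.mpr ht)
        rw [← ht'] at this; exact this
      have hax : a = t.getLastD 0 + t.length := by
        have ha1 : a - 1 ∈ a :: t := by
          refine hcl a (by simp) ?_
          rw [getLastD_cons_ne ht]
          have := hat _ (getLastD_mem' ht); omega
        have hahd : t.headD 0 < a := hat _ (headD_mem' ht)
        rcases List.mem_cons.mp ha1 with h | h
        · have := hat _ (getLastD_mem' ht); omega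
        · have := mem_le_headD hs.of_cons h
          have h3 : 1 ≤ t.length := List.length_pos_iff.mpr ht
          omega
      have h3 : 1 ≤ t.length := List.length_pos_iff.mpr ht
      have hlen : (a :: t).length = t.length + 1 := rfl
      rw [hlen, List.range'_concat]
      conv_lhs => rw [ht', hax]
      simp

lemma decFactors_flatten : ∀ w : List ℕ, (decFactors w).flatten = w := by
  intro w
  induction w with
  | nil => rfl
  | cons a rest ih =>
    rcases h : decFactors rest with _ | ⟨c, fs⟩
    · rw [show decFactors (a :: rest) = [a] :: decFactors rest by simp only [decFactors, h]]
      simp_all [h]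
    · rcases c with _ | ⟨b, f⟩
      · rw [show decFactors (a :: rest) = [a] :: decFactors rest by simp only [decFactors, h]]
        simp_all [h]
      · by_cases hba : b < a
        · rw [show decFactors (a :: rest) = (a :: b :: f) :: fs by
            simp only [decFactors, h]; simp [hba]]
          rw [h] at ih; simp_all
        · rw [show decFactors (a :: rest) = [a] :: (b :: f) :: fs by
            simp only [decFactors, h]; simp [hba]]
          rw [h] at ih; simp_all

lemma decFactors_cols : ∀ w : List ℕ, ∀ c ∈ decFactors w, c ≠ [] ∧ c.Chain' (· > ·) := by
  intro w
  induction w with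
  | nil => simp [decFactors]
  | cons a rest ih =>
    rcases h : decFactors rest with _ | ⟨c, fs⟩
    · rw [show decFactors (a :: rest) = [a] :: decFactors rest by simp only [decFactors, h]]
      rw [h]; simp [List.Chain']
    · rcases c with _ | ⟨b, f⟩
      · rw [show decFactors (a :: rest) = [a] :: decFactors rest by simp only [decFactors, h]]
        rw [h]
        intro d hd
        rcases List.mem_cons.mp hd with rfl | hd
        · simp [List.Chain']
        · exact ih d (h ▸ hd)
      · rw [h] at ih
        by_cases hba : b < a
        · rw [show decFactors (a :: rest) = (a :: b :: f) :: fs by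
            simp only [decFactors, h]; simp [hba]]
          intro d hd
          rcases List.mem_cons.mp hd with rfl | hd
          · obtain ⟨-, hch⟩ := ih (b :: f) (by simp)
            exact ⟨by simp, List.isChain_cons_cons.mpr ⟨hba, hch⟩⟩
          · exact ih d (by simp [hd])
        · rw [show decFactors (a :: rest) = [a] :: (b :: f) :: fs by
            simp only [decFactors, h]; simp [hba]]
          intro d hd
          rcases List.mem_cons.mp hd with rfl | hd
          · simp [List.Chain']
          · exact ih d hd

lemma decFactors_sorted (w : List ℕ) : ∀ c ∈ decFactors w, c ≠ [] ∧ c.Pairwise (· > ·) := by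
  intro c hc
  obtain ⟨h1, h2⟩ := decFactors_cols w c hc
  exact ⟨h1, List.isChain_iff_pairwise.mp h2⟩

lemma hasInv_iff {i : ℕ} {u : List ℕ} :
    HasInv i u ↔ ∃ s t, u = s ++ t ∧ (i+1) ∈ s ∧ i ∈ t := by
  constructor
  · rintro ⟨v, w, x, rfl⟩
    exact ⟨v ++ [i+1], w ++ i :: x, by simp, by simp, by simp⟩
  · rintro ⟨s, t, rfl, hs, ht⟩
    obtain ⟨s1, s2, rfl⟩ := List.append_of_mem hs
    obtain ⟨t1, t2, rfl⟩ := List.append_of_mem ht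
    exact ⟨s1, s2 ++ t1, t2, by simp⟩

lemma HasInv.append_right' {i : ℕ} {t : List ℕ} (h : HasInv i t) (s : List ℕ) :
    HasInv i (s ++ t) := by
  obtain ⟨v, w, x, rfl⟩ := h
  exact ⟨s ++ v, w, x, by simp⟩

lemma flatten_ge_headD : ∀ (c : List ℕ) (cs : List (List ℕ)),
    (∀ d ∈ c :: cs, d ≠ [] ∧ d.Pairwise (· > ·)) →
    List.Chain' (fun c d => c.headD 0 ≤ d.getLastD 0) (c :: cs) →
    ∀ y ∈ cs.flatten, c.headD 0 ≤ y := by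
  intro c cs
  induction cs generalizing c with
  | nil => simp
  | cons d cs' ih =>
    intro hcols hch y hy
    rw [List.flatten_cons] at hy
    have hlink : c.headD 0 ≤ d.getLastD 0 := (List.isChain_cons_cons.mp hch).1
    have hd := hcols d (by simp)
    rcases List.mem_append.mp hy with h | h
    · exact le_trans hlink (getLastD_le_mem hd.2 h)
    · have := ih d (fun e he => hcols e (by simp [he])) (List.isChain_cons_cons.mp hch).2 y h
      exact le_trans (le_trans hlink (getLastD_le_headD hd.2 hd.1)) this

lemma flatten_ge_getLastD (c : List ℕ) (cs : List (List ℕ))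
    (hcols : ∀ d ∈ c :: cs, d ≠ [] ∧ d.Pairwise (· > ·))
    (hch : List.Chain' (fun c d => c.headD 0 ≤ d.getLastD 0) (c :: cs)) :
    ∀ y ∈ (c :: cs).flatten, c.getLastD 0 ≤ y := by
  intro y hy
  rw [List.flatten_cons] at hy
  rcases List.mem_append.mp hy with h | h
  · exact getLastD_le_mem (hcols c (by simp)).2 h
  · have hc := hcols c (by simp)
    exact le_trans (getLastD_le_headD hc.2 hc.1) (flatten_ge_headD c cs hcols hch y h)

lemma sorted_split {c : List ℕ} (hs : c.Pairwise (· > ·)) {a b : ℕ} (ha : a ∈ c) (hb : b ∈ c)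
    (hab : b < a) : ∃ p q, c = p ++ a :: q ∧ b ∈ q := by
  obtain ⟨p, q, rfl⟩ := List.append_of_mem ha
  refine ⟨p, q, rfl, ?_⟩
  rcases List.mem_append.mp hb with h | h
  · exfalso
    have := (List.pairwise_append.mp hs).2.2 b h a (by simp)
    omega
  · rcases List.mem_cons.mp h with h | h
    · omega
    · exact h

lemma hasInv_of_col {i : ℕ} {cols : List (List ℕ)}
    (hcols : ∀ d ∈ cols, d ≠ [] ∧ d.Pairwise (· > ·))
    {c : List ℕ} (hc : c ∈ cols) (h1 : (i+1) ∈ c) (h0 : i ∈ c) :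
    HasInv i cols.flatten := by
  obtain ⟨p, q, hsplit, hq⟩ := sorted_split (hcols c hc).2 h1 h0 (by omega)
  obtain ⟨pre, post, rfl⟩ := List.append_of_mem hc
  rw [hasInv_iff]
  refine ⟨pre.flatten ++ p ++ [i+1], q ++ post.flatten, ?_, by simp, by simp [hq]⟩
  rw [List.flatten_append, List.flatten_cons, hsplit]
  simp

lemma col_of_hasInv {i : ℕ} : ∀ (cols : List (List ℕ)),
    (∀ d ∈ cols, d ≠ [] ∧ d.Pairwise (· > ·)) →
    List.Chain' (fun c d => c.headD 0 ≤ d.getLastD 0) cols →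
    ∀ s t, cols.flatten = s ++ t → (i+1) ∈ s → i ∈ t →
    ∃ c ∈ cols, (i+1) ∈ c ∧ i ∈ c := by
  intro cols
  induction cols with
  | nil =>
    intro _ _ s t hst hs _
    have : s = [] := by
      have := congrArg List.length hst
      simp at this
      exact List.length_eq_zero_iff.mp (by omega)
    simp [this] at hs
  | cons c cs ih =>
    intro hcols hch s t hst hs ht
    have hub : ∀ y ∈ cs.flatten, c.headD 0 ≤ y := flatten_ge_headD c cs hcols hch
    rw [List.flatten_cons] at hst
    rcases List.append_eq_append_iff.mp hst with ⟨a', ha1, ha2⟩ | ⟨c', hc1, hc2⟩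
    · -- s = c ++ a', cs.flatten = a' ++ t
      rcases List.mem_append.mp (ha1 ▸ hs) with h | h
      · exfalso
        have h1 : i + 1 ≤ c.headD 0 := mem_le_headD (hcols c (by simp)).2 h
        have h2 : c.headD 0 ≤ i := hub i (ha2 ▸ List.mem_append_right a' ht)
        omega
      · obtain ⟨d, hd, h⟩ := ih (fun e he => hcols e (by simp [he]))
          hch.tail a' t ha2 h ht
        exact ⟨d, by simp [hd], h⟩
    · -- c = s ++ c', t = c' ++ cs.flatten
      have hsc : (i+1) ∈ c := hc1 ▸ List.mem_append_left c' hs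
      rcases List.mem_append.mp (hc2 ▸ ht) with h | h
      · exact ⟨c, by simp, hsc, hc1 ▸ List.mem_append_right s h⟩
      · exfalso
        have h1 : i + 1 ≤ c.headD 0 := mem_le_headD (hcols c (by simp)).2 hsc
        have h2 : c.headD 0 ≤ i := hub i h
        omega

lemma hasInv_iff_col {i : ℕ} {cols : List (List ℕ)}
    (hcols : ∀ d ∈ cols, d ≠ [] ∧ d.Pairwise (· > ·))
    (hch : List.Chain' (fun c d => c.headD 0 ≤ d.getLastD 0) cols) :
    HasInv i cols.flatten ↔ ∃ c ∈ cols, (i+1) ∈ c ∧ i ∈ c := by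
  constructor
  · intro h
    obtain ⟨s, t, hst, hs, ht⟩ := hasInv_iff.mp h
    exact col_of_hasInv cols hcols hch s t hst hs ht
  · rintro ⟨c, hc, h1, h0⟩
    exact hasInv_of_col hcols hc h1 h0

lemma replaceFirst_eq_none {a b : ℕ} : ∀ {u : List ℕ}, replaceFirst a b u = none ↔ a ∉ u := by
  intro u
  induction u with
  | nil => simp [replaceFirst]
  | cons x xs ih =>
    simp only [replaceFirst]
    split_ifs with h
    · simp [h]
    · simp [ih, Option.map_eq_none_iff, Ne.symm h, h]

lemma qe_eq_none {i : ℕ} {u : List ℕ} :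
    qe i u = none ↔ HasInv i u ∨ (i+1) ∉ u := by
  unfold qe
  split_ifs with h
  · simp [h]
  · simp [h, replaceFirst_eq_none]

/-- Structural predicate: the columns are those of the highest-weight quasi-ribbon
tableau, with the top row of the first column at row `r`. -/
def SCols : List (List ℕ) → ℕ → Prop
  | [], _ => True
  | c :: cs, r => c = (List.range' r c.length).reverse ∧ SCols cs (r + c.length - 1)

lemma rowLengths_pos : ∀ (hs : List ℕ), (∀ x ∈ hs, 0 < x) → ∀ y ∈ rowLengths hs, 0 < y
  | [], _, y, hy => by simp [rowLengths] at hy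
  | [d], hp, y, hy => by
      simp only [rowLengths] at hy
      have := List.eq_of_mem_replicate hy; omega
  | d :: e :: rest, hp, y, hy => by
      have hrec := rowLengths_pos (e :: rest) (fun x hx => hp x (by simp at hx ⊢; tauto))
      rcases h : rowLengths (e :: rest) with _ | ⟨p, ps⟩
      · simp only [rowLengths, h] at hy
        rcases List.mem_append.mp hy with h' | h'
        · have := List.eq_of_mem_replicate h'; omega
        · simp at h'; omega
      · simp only [rowLengths, h] at hy
        rcases List.mem_append.mp hy with h' | h'
        · have := List.eq_of_mem_replicate h'; omega
        · rcases List.mem_cons.mp h' with rfl | h''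
          · have : 0 < p := hrec p (by simp [h])
            omega
          · exact hrec y (by simp [h, h''])

lemma rowLengths_ne_nil : ∀ (hs : List ℕ), hs ≠ [] → (∀ x ∈ hs, 0 < x) → rowLengths hs ≠ []
  | [], h, _ => absurd rfl h
  | [d], _, hp => by
      have hd : 0 < d := hp d (by simp)
      simp only [rowLengths]
      intro hcontra
      have := congrArg List.length hcontra
      simp at this; omega
  | d :: e :: rest, _, hp => by
      rcases h : rowLengths (e :: rest) with _ | ⟨p, ps⟩
      · simp only [rowLengths, h]
        intro hcontra
        have := congrArg List.length hcontra
        simp at this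
      · simp only [rowLengths, h]
        intro hcontra
        have := congrArg List.length hcontra
        simp at this

lemma getD_repl_append (m p : ℕ) (ps : List ℕ) (k : ℕ) :
    (List.replicate m 1 ++ p :: ps).getD k 0 = if k < m then 1 else (p :: ps).getD (k - m) 0 := by
  split_ifs with h
  · rw [List.getD_append _ _ _ _ (by simpa using h), getD_replicate', if_pos h]
  · rw [List.getD_append_right _ _ _ _ (by simpa using not_lt.mp h)]
    simp

lemma scols_count : ∀ (cols : List (List ℕ)) (r : ℕ), (∀ c ∈ cols, c ≠ []) →
    SCols cols r → ∀ j, cols.flatten.count j =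
      if j < r then 0 else (rowLengths (cols.map List.length)).getD (j - r) 0 := by
  intro cols
  induction cols with
  | nil =>
    intro r _ _ j
    simp only [List.flatten_nil, List.count_nil, List.map_nil]
    split_ifs <;> simp [rowLengths]
  | cons c cs ih =>
    intro r hne hS j
    obtain ⟨hc, hS'⟩ := hS
    have hd : 0 < c.length := List.length_pos_iff.mpr (hne c (by simp))
    have hcount : c.count j = if r ≤ j ∧ j < r + c.length then 1 else 0 := by
      conv_lhs => rw [hc]
      rw [count_rev_range']
    rw [List.flatten_cons, List.count_append, hcount]
    rcases cs with _ | ⟨e, cs'⟩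
    · simp only [List.flatten_nil, List.count_nil, List.map_cons, List.map_nil]
      rw [show rowLengths [c.length] = List.replicate c.length 1 from rfl, getD_replicate']
      split_ifs <;> omega
    · have hpos' : ∀ x ∈ e.length :: cs'.map List.length, 0 < x := by
        intro x hx
        rcases List.mem_cons.mp hx with rfl | hx
        · exact List.length_pos_iff.mpr (hne e (by simp))
        · obtain ⟨l, hl, rfl⟩ := List.mem_map.mp hx
          exact List.length_pos_iff.mpr (hne l (by simp [hl]))
      have hρne := rowLengths_ne_nil _ (by simp) hpos'
      rcases hρ : rowLengths (e.length :: cs'.map List.length) with _ | ⟨p, ps⟩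
      · exact absurd hρ hρne
      have hrl : rowLengths (c.length :: e.length :: cs'.map List.length) =
          List.replicate (c.length - 1) 1 ++ (p+1) :: ps := by
        simp only [rowLengths, hρ]
      have ihj := ih (r + c.length - 1) (fun x hx => hne x (by simp [hx])) hS' j
      simp only [List.map_cons] at ihj ⊢
      rw [hρ] at ihj
      rw [ihj, hrl, getD_repl_append]
      by_cases h1 : j < r
      · rw [if_neg (by omega), if_pos (by omega), if_pos h1]
      by_cases h2 : j < r + c.length - 1
      · rw [if_pos ⟨by omega, by omega⟩, if_pos h2, if_neg h1, if_pos (by omega)]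
      by_cases h3 : j = r + c.length - 1
      · rw [if_pos ⟨by omega, by omega⟩, if_neg h2, if_neg h1, if_neg (by omega)]
        rw [show j - (r + c.length - 1) = 0 by omega, show j - r - (c.length - 1) = 0 by omega]
        simp; omega
      · obtain ⟨k, hk⟩ : ∃ k, j - (r + c.length - 1) = k + 1 := ⟨j - (r + c.length - 1) - 1, by omega⟩
        rw [if_neg (by omega), if_neg h2, if_neg h1, if_neg (by omega)]
        rw [hk, show j - r - (c.length - 1) = k + 1 by omega]
        simp

lemma sorted_nodup {c : List ℕ} (hs : c.Pairwise (· > ·)) : c.Nodup :=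
  hs.imp (fun h => (ne_of_gt h))

lemma count_to_scols : ∀ (cols : List (List ℕ)) (r : ℕ),
    (∀ c ∈ cols, c ≠ [] ∧ c.Pairwise (· > ·)) →
    List.Chain' (fun c d => c.headD 0 ≤ d.getLastD 0) cols →
    (∀ j, j < r → cols.flatten.count j = 0) →
    (∀ j, r ≤ j → cols.flatten.count j =
      (rowLengths (cols.map List.length)).getD (j - r) 0) →
    SCols cols r := by
  intro cols
  induction cols with
  | nil => intro r _ _ _ _; trivial
  | cons c cs ih =>
    intro r hcols hch h0 hc
    have hcne := (hcols c (by simp)).1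
    have hcs := (hcols c (by simp)).2
    have hd : 0 < c.length := List.length_pos_iff.mpr hcne
    have hgeR : ∀ x ∈ (c :: cs).flatten, r ≤ x := by
      intro x hx
      by_contra hlt
      have h1 := h0 x (by omega)
      have h2 : 0 < (c :: cs).flatten.count x := List.count_pos_iff.mpr hx
      omega
    have hub : ∀ y ∈ cs.flatten, c.headD 0 ≤ y := flatten_ge_headD c cs hcols hch
    have hcmemflat : ∀ x ∈ c, x ∈ (c :: cs).flatten := by
      intro x hx; rw [List.flatten_cons]; exact List.mem_append_left _ hx
    rcases cs with _ | ⟨e, cs'⟩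
    · -- single column
      have hhead : c.headD 0 < r + c.length := by
        by_contra hge
        have hmem : c.headD 0 ∈ (c :: ([] : List (List ℕ))).flatten := hcmemflat _ (headD_mem' hcne)
        have h1 := hc (c.headD 0) (hgeR _ hmem)
        simp only [List.map_cons, List.map_nil] at h1
        rw [show rowLengths [c.length] = List.replicate c.length 1 from rfl, getD_replicate',
          if_neg (by omega)] at h1
        have h2 : 0 < (c :: ([] : List (List ℕ))).flatten.count (c.headD 0) :=
          List.count_pos_iff.mpr hmem
        omega
      have hceq := sorted_eq_range' hcs (fun x hx => hgeR x (hcmemflat x hx))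
        (fun x hx => lt_of_le_of_lt (mem_le_headD hcs hx) (by omega))
      exact ⟨hceq, trivial⟩
    · have hene := (hcols e (by simp)).1
      have hpos' : ∀ x ∈ e.length :: cs'.map List.length, 0 < x := by
        intro x hx
        rcases List.mem_cons.mp hx with rfl | hx
        · exact List.length_pos_iff.mpr hene
        · obtain ⟨l, hl, rfl⟩ := List.mem_map.mp hx
          exact List.length_pos_iff.mpr ((hcols l (by simp [hl])).1)
      have hρne := rowLengths_ne_nil _ (by simp) hpos'
      rcases hρ : rowLengths (e.length :: cs'.map List.length) with _ | ⟨p, ps⟩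
      · exact absurd hρ hρne
      have hp : 0 < p := rowLengths_pos _ hpos' p (by simp [hρ])
      have hrl : rowLengths (c.length :: e.length :: cs'.map List.length) =
          List.replicate (c.length - 1) 1 ++ (p+1) :: ps := by
        simp only [rowLengths, hρ]
      have hcgetD : ∀ j, r ≤ j → c.count j + (e :: cs').flatten.count j =
          if j - r < c.length - 1 then 1 else ((p+1) :: ps).getD (j - r - (c.length - 1)) 0 := by
        intro j hj
        have := hc j hj
        rw [List.flatten_cons, List.count_append] at this
        simp only [List.map_cons] at this
        rw [hrl, getD_repl_append] at this
        exact this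
      -- the head of c is exactly r + c.length - 1
      have hhead : c.headD 0 < r + c.length := by
        by_contra hge
        have hj := hcgetD (r + c.length - 1) (by omega)
        rw [if_neg (by omega), show r + c.length - 1 - r - (c.length - 1) = 0 by omega] at hj
        have hnotcs : (e :: cs').flatten.count (r + c.length - 1) = 0 :=
          List.count_eq_zero.mpr (fun hmem => by have := hub _ hmem; omega)
        have hcle : c.count (r + c.length - 1) ≤ 1 :=
          List.nodup_iff_count_le_one.mp (sorted_nodup hcs) _
        simp only [List.getD_cons_zero] at hj
        omega
      have hceq := sorted_eq_range' hcs (fun x hx => hgeR x (hcmemflat x hx))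
        (fun x hx => lt_of_le_of_lt (mem_le_headD hcs hx) (by omega))
      have hccount : ∀ j, c.count j = if r ≤ j ∧ j < r + c.length then 1 else 0 := by
        intro j
        conv_lhs => rw [hceq]
        rw [count_rev_range']
      have h0' : ∀ j, j < r + c.length - 1 → (e :: cs').flatten.count j = 0 := by
        intro j hj
        rcases Nat.lt_or_ge j r with h | h
        · have := h0 j h
          rw [List.flatten_cons, List.count_append] at this
          omega
        · have := hcgetD j h
          rw [if_pos (by omega), hccount, if_pos ⟨h, by omega⟩] at this
          omega
      have hc' : ∀ j, r + c.length - 1 ≤ j → (e :: cs').flatten.count j =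
          (rowLengths ((e :: cs').map List.length)).getD (j - (r + c.length - 1)) 0 := by
        intro j hj
        simp only [List.map_cons]
        rw [hρ]
        have := hcgetD j (by omega)
        by_cases h3 : j = r + c.length - 1
        · rw [if_neg (by omega), show j - r - (c.length - 1) = 0 by omega] at this
          rw [hccount, if_pos ⟨by omega, by omega⟩] at this
          rw [show j - (r + c.length - 1) = 0 by omega]
          simp only [List.getD_cons_zero] at this ⊢
          omega
        · obtain ⟨k, hk⟩ : ∃ k, j - (r + c.length - 1) = k + 1 :=
            ⟨j - (r + c.length - 1) - 1, by omega⟩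
          rw [if_neg (by omega), show j - r - (c.length - 1) = k + 1 by omega] at this
          rw [hccount, if_neg (by omega)] at this
          rw [hk]
          simp only [List.getD_cons_succ] at this ⊢
          omega
      exact ⟨hceq, ih (r + c.length - 1) (fun x hx => hcols x (by simp [hx])) hch.tail h0' hc'⟩

lemma scols_hasInv : ∀ (cols : List (List ℕ)) (r : ℕ),
    (∀ c ∈ cols, c ≠ [] ∧ c.Pairwise (· > ·)) →
    SCols cols r →
    ∀ a, r < a → a ∈ cols.flatten → HasInv (a - 1) cols.flatten := by
  intro cols
  induction cols with
  | nil => intro r _ _ a _ ha; simp at ha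
  | cons c cs ih =>
    intro r hcols hS a hra hmem
    obtain ⟨hc, hS'⟩ := hS
    have hd : 0 < c.length := List.length_pos_iff.mpr (hcols c (by simp)).1
    by_cases hle : a ≤ r + c.length - 1
    · have ha : a ∈ c := by rw [hc]; exact mem_rev_range'.mpr ⟨by omega, by omega⟩
      have ha1 : a - 1 ∈ c := by rw [hc]; exact mem_rev_range'.mpr ⟨by omega, by omega⟩
      have ha' : (a - 1) + 1 ∈ c := by rwa [show a - 1 + 1 = a by omega]
      exact hasInv_of_col hcols (List.mem_cons_self (a := c) (l := cs)) ha' ha1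
    · have hacs : a ∈ cs.flatten := by
        rw [List.flatten_cons] at hmem
        rcases List.mem_append.mp hmem with h | h
        · exfalso
          rw [hc] at h
          have := mem_rev_range'.mp h
          omega
        · exact h
      have := ih (r + c.length - 1) (fun x hx => hcols x (by simp [hx])) hS' a (by omega) hacs
      rw [List.flatten_cons]
      exact this.append_right' c

lemma q_to_scols : ∀ (cols : List (List ℕ)) (r : ℕ),
    (∀ c ∈ cols, c ≠ [] ∧ c.Pairwise (· > ·)) →
    List.Chain' (fun c d => c.headD 0 ≤ d.getLastD 0) cols →
    (cols = [] ∨ (cols.headD []).getLastD 0 = r) →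
    (∀ a, r < a → a ∈ cols.flatten → ∃ c ∈ cols, a ∈ c ∧ a - 1 ∈ c) →
    SCols cols r := by
  intro cols
  induction cols with
  | nil => intro r _ _ _ _; trivial
  | cons c cs ih =>
    intro r hcols hch hr hQ
    have hcne := (hcols c (by simp)).1
    have hcs := (hcols c (by simp)).2
    have hd : 0 < c.length := List.length_pos_iff.mpr hcne
    have hrc : c.getLastD 0 = r := by
      rcases hr with h | h
      · simp at h
      · simpa using h
    have hcl : ∀ j ∈ c, c.getLastD 0 < j → j - 1 ∈ c := by
      intro j hj hgt
      obtain ⟨col, hcol, hjc, hj1c⟩ := hQ j (by omega)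
        (by rw [List.flatten_cons]; exact List.mem_append_left _ hj)
      rcases List.mem_cons.mp hcol with rfl | hcol
      · exact hj1c
      · exfalso
        have h1 := flatten_ge_headD c cs hcols hch (j-1) (List.mem_flatten.mpr ⟨col, hcol, hj1c⟩)
        have h2 := mem_le_headD hcs hj
        omega
    have hceq' : c = (List.range' r c.length).reverse := by
      have := sorted_closure_eq_range' hcs hcne hcl
      rwa [hrc] at this
    have hhead : c.headD 0 = r + c.length - 1 := by
      conv_lhs => rw [hceq']
      exact headD_rev_range' hd
    rcases cs with _ | ⟨e, cs'⟩
    · exact ⟨hceq', trivial⟩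
    · have hene := (hcols e (by simp)).1
      have hlink : c.headD 0 ≤ e.getLastD 0 := (List.isChain_cons_cons.mp hch).1
      have hlast : e.getLastD 0 = r + c.length - 1 := by
        by_contra hne'
        have hgt : r + c.length - 1 < e.getLastD 0 := by omega
        have hjmem : e.getLastD 0 ∈ (c :: e :: cs').flatten :=
          List.mem_flatten.mpr ⟨e, by simp, getLastD_mem' hene⟩
        obtain ⟨col, hcol, hjc, hj1c⟩ := hQ (e.getLastD 0) (by omega) hjmem
        rcases List.mem_cons.mp hcol with rfl | hcol
        · have := mem_le_headD hcs hjc; omega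
        · have hge := flatten_ge_getLastD e cs' (fun x hx => hcols x (by simp at hx ⊢; tauto))
            hch.tail (e.getLastD 0 - 1) (List.mem_flatten.mpr ⟨col, hcol, hj1c⟩)
          omega
      have hQ' : ∀ a, r + c.length - 1 < a → a ∈ (e :: cs').flatten →
          ∃ col ∈ e :: cs', a ∈ col ∧ a - 1 ∈ col := by
        intro a ha hamem
        obtain ⟨col, hcol, h1, h2⟩ := hQ a (by omega)
          (by rw [List.flatten_cons]; exact List.mem_append_right _ hamem)
        rcases List.mem_cons.mp hcol with rfl | hcol
        · exfalso; have := mem_le_headD hcs h1; omega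
        · exact ⟨col, hcol, h1, h2⟩
      exact ⟨hceq', ih (r + c.length - 1) (fun x hx => hcols x (by simp [hx])) hch.tail
        (Or.inr (by simpa using hlast)) hQ'⟩
end HypoCrystal
namespace HypoCrystal

/-- Let `α` be a composition and `w ∈ 𝒜_n^*` a quasi-ribbon word of
shape `α`. Then `w` is a highest-weight word if and only if `wt(w) = α`, i.e. the
number of occurrences of the letter `j` in `w` is `α_j` for `j ≤ ℓ(α)` and `0` for
`j > ℓ(α)`. -/
theorem highestWeight_iff_weight_eq_shape (n : ℕ) (α : List ℕ)
    (hpos : ∀ a ∈ α, 0 < a) (w : List ℕ) (hword : IsWord n w) (hq : IsQRWord w)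
    (hs : shape w = α) :
    HighestWeight n w ↔ (∀ j, 1 ≤ j → w.count j = α.getD (j - 1) 0) := by
  have hflat : (decFactors w).flatten = w := decFactors_flatten w
  have hprops : ∀ c ∈ decFactors w, c ≠ [] ∧ c.Pairwise (· > ·) := decFactors_sorted w
  have hch : List.Chain' (fun c d => c.headD 0 ≤ d.getLastD 0) (decFactors w) := hq
  have hshape : α = rowLengths ((decFactors w).map List.length) := hs.symm
  constructor
  · -- highest weight → weights are the shape
    intro hHW j hj
    have hS : SCols (decFactors w) 1 := by
      rcases hceq : decFactors w with _ | ⟨c, cs⟩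
      · trivial
      · rw [hceq] at hflat hprops hch
        have hcne := (hprops c (by simp)).1
        have hge : ∀ y ∈ (c :: cs).flatten, c.getLastD 0 ≤ y :=
          flatten_ge_getLastD c cs hprops hch
        have hr0w : c.getLastD 0 ∈ w := by
          rw [← hflat]
          exact List.mem_flatten.mpr ⟨c, by simp, getLastD_mem' hcne⟩
        have hr01 : 1 ≤ c.getLastD 0 := (hword _ hr0w).1
        have hQ : ∀ a, 1 < a → a ∈ (c :: cs).flatten →
            ∃ col ∈ c :: cs, a ∈ col ∧ a - 1 ∈ col := by
          intro a ha hamem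
          have haw : a ∈ w := hflat ▸ hamem
          have han : a ≤ n := (hword a haw).2
          have hqe := hHW (a - 1) (by omega) (by omega)
          rcases qe_eq_none.mp hqe with hinv | hnot
          · have hinv' : HasInv (a - 1) (c :: cs).flatten := by rwa [hflat]
            obtain ⟨col, hcol, h1, h2⟩ := (hasInv_iff_col hprops hch).mp hinv'
            rw [show a - 1 + 1 = a by omega] at h1
            exact ⟨col, hcol, h1, h2⟩
          · exfalso
            rw [show a - 1 + 1 = a by omega] at hnot
            exact hnot haw
        have hr0eq : c.getLastD 0 = 1 := by
          by_contra hne'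
          obtain ⟨col, hcol, h1, h2⟩ := hQ (c.getLastD 0) (by omega)
            (List.mem_flatten.mpr ⟨c, by simp, getLastD_mem' hcne⟩)
          have := hge (c.getLastD 0 - 1) (List.mem_flatten.mpr ⟨col, hcol, h2⟩)
          omega
        exact q_to_scols (c :: cs) 1 hprops hch (Or.inr (by simpa using hr0eq)) hQ
    have hcnt := scols_count (decFactors w) 1 (fun c hc => (hprops c hc).1) hS j
    rw [hflat] at hcnt
    rw [hcnt, if_neg (by omega), hshape]
  · -- weights are the shape → highest weight
    intro hcount
    have h0 : ∀ j, j < 1 → (decFactors w).flatten.count j = 0 := by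
      intro j hjlt
      rw [hflat]
      refine List.count_eq_zero.mpr (fun hmem => ?_)
      have := (hword j hmem).1
      omega
    have hc : ∀ j, 1 ≤ j → (decFactors w).flatten.count j =
        (rowLengths ((decFactors w).map List.length)).getD (j - 1) 0 := by
      intro j hj
      rw [hflat, ← hshape]
      exact hcount j hj
    have hS := count_to_scols (decFactors w) 1 hprops hch h0 hc
    intro i hi1 hin
    rw [qe_eq_none]
    by_cases hmem : (i + 1) ∈ w
    · left
      have := scols_hasInv (decFactors w) 1 hprops hS (i + 1) (by omega)
        (by rwa [hflat])
      rw [show i + 1 - 1 = i by omega, hflat] at this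
      exact this
    · right; exact hmem

end HypoCrystal
end
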